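/- arXiv:1401.4636 — 4 statements merged into one kernel-verified Lean document; each statement's English description precedes it below -/
import Mathlib

section
/- Let U : ℝ × ℝ → ℝ be twice continuously differentiable in its second argument with ∂U/∂Q < 0. Fix X and Q > 0, and define p(α) := U(X, Q-α) - α·(∂U/∂Q)(X, Q-α) for α ∈ [0, Q]. Then p(0) = U(X, Q), and if additionally ∂²U/∂Q² > 0, then p'(α) = α·(∂²U/∂Q²)(X, Q-α) - 2·(∂U/∂Q)(X, Q-α) > 0 for all α ∈ [0, Q], so p is strictly increasing on [0, Q]. -/
open Set

/-- Marginal price formula in the equilibrium LOB model: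
`p α = U(X, Q-α) - α·∂_Q U(X, Q-α)` satisfies `p 0 = U(X,Q)` and, when
`∂_Q U < 0` and `∂²_Q U > 0`, `p' α = α·∂²_Q U(X,Q-α) - 2·∂_Q U(X,Q-α) > 0`
on `[0,Q]`, so `p` is strictly increasing there. -/
theorem stmt_0 (U U' U'' : ℝ → ℝ → ℝ)
    (hU' : ∀ x q, HasDerivAt (U x) (U' x q) q)
    (hU'' : ∀ x q, HasDerivAt (U' x) (U'' x q) q)
    (hU''cont : ∀ x, Continuous (U'' x))
    (hUQneg : ∀ x q, U' x q < 0)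
    (X Q : ℝ) (hQ : 0 < Q)
    (p : ℝ → ℝ) (hp : ∀ α, p α = U X (Q - α) - α * U' X (Q - α))
    (hUQQpos : ∀ x q, 0 < U'' x q) :
    p 0 = U X Q ∧
    (∀ α ∈ Icc (0:ℝ) Q,
      HasDerivAt p (α * U'' X (Q - α) - 2 * U' X (Q - α)) α ∧
      0 < α * U'' X (Q - α) - 2 * U' X (Q - α)) ∧
    StrictMonoOn p (Icc (0:ℝ) Q) := by

  have hderiv : ∀ α : ℝ, HasDerivAt p (α * U'' X (Q - α) - 2 * U' X (Q - α)) α := by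
    intro α
    have hsub : HasDerivAt (fun x : ℝ => Q - x) (-1) α := by
      simpa using (hasDerivAt_id α).const_sub Q
    have h1 : HasDerivAt (fun x : ℝ => U X (Q - x)) (-U' X (Q - α)) α := by
      have h := (hU' X (Q - α)).comp α hsub; rw [mul_neg_one] at h; exact h
    have h2 : HasDerivAt (fun x : ℝ => U' X (Q - x)) (-U'' X (Q - α)) α := by
      have h := (hU'' X (Q - α)).comp α hsub; rw [mul_neg_one] at h; exact h
    have h3 : HasDerivAt (fun x : ℝ => x * U' X (Q - x))
        (1 * U' X (Q - α) + α * (-U'' X (Q - α))) α :=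
      (hasDerivAt_id α).mul h2
    have h4 := h1.sub h3
    have : HasDerivAt (fun x : ℝ => U X (Q - x) - x * U' X (Q - x))
        (α * U'' X (Q - α) - 2 * U' X (Q - α)) α := by
      exact h4.congr_deriv (by ring)
    exact this.congr_of_eventuallyEq (Filter.Eventually.of_forall fun x => (hp x))
  have hpos : ∀ α ∈ Icc (0:ℝ) Q, 0 < α * U'' X (Q - α) - 2 * U' X (Q - α) := by
    intro α hα
    have h1 : 0 ≤ α * U'' X (Q - α) :=
      mul_nonneg hα.1 (hUQQpos X (Q - α)).le
    nlinarith [hUQneg X (Q - α)]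
  refine ⟨by rw [hp 0]; ring, fun α hα => ⟨hderiv α, hpos α hα⟩, ?_⟩
  exact StrictMonoOn.mono (strictMonoOn_of_hasDerivWithinAt_pos (convex_Icc 0 Q)
    (fun x hx => (hderiv x).continuousAt.continuousWithinAt)
    (fun x hx => ((hderiv x).hasDerivWithinAt))
    (fun x hx => hpos x (interior_subset hx))) (subset_refl _)
end

section
/- Let U : ℝ × ℝ → ℝ be continuously differentiable in its second argument, fix X and Q > 0, and define p(α) := U(X, Q-α) - α·(∂U/∂Q)(X, Q-α). Suppose p is continuously differentiable with p'(α) > 0 on [0, Q], and define the density μ along the curve by μ(p(α)) := 1/p'(α). Then for every α ∈ [0, Q]: (i) ∫_{p(0)}^{p(α)} μ(y) dy = α (change of variables y = p(u)); and (ii) ∫_{p(0)}^{p(α)} y μ(y) dy = α·U(X, Q-α). -/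
open Set intervalIntegral

/-- The equilibrium density `μ` of the LOB, defined along the price curve by
`μ (p α) = 1 / p' α`, satisfies the equilibrium conditions:
`∫_{p 0}^{p α} μ(y) dy = α` and `∫_{p 0}^{p α} y μ(y) dy = α · U(X, Q-α)`. -/
theorem stmt_1 (U U' : ℝ → ℝ → ℝ)
    (hU' : ∀ x q, HasDerivAt (U x) (U' x q) q)
    (hU'cont : ∀ x, Continuous (U' x))
    (X Q : ℝ) (hQ : 0 < Q)
    (p p' : ℝ → ℝ)
    (hp : ∀ α, p α = U X (Q - α) - α * U' X (Q - α))
    (hpderiv : ∀ α, HasDerivAt p (p' α) α)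
    (hp'cont : Continuous p')
    (hp'pos : ∀ α ∈ Icc (0:ℝ) Q, 0 < p' α)
    (μ : ℝ → ℝ)
    (hμ : ∀ α ∈ Icc (0:ℝ) Q, μ (p α) = 1 / p' α) :
    ∀ α ∈ Icc (0:ℝ) Q,
      (∫ y in (p 0)..(p α), μ y) = α ∧
      (∫ y in (p 0)..(p α), y * μ y) = α * U X (Q - α) := by
  intro a ha
  obtain ⟨ha0, haQ⟩ := ha
  have hpc : Continuous p := by
    apply continuous_iff_continuousAt.2
    exact fun x => (hpderiv x).continuousAt
  have hsub : Icc (0:ℝ) a ⊆ Icc 0 Q := Icc_subset_Icc le_rfl haQ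
  -- strict monotonicity on [0,Q]
  have hmono : StrictMonoOn p (Icc 0 Q) := by
    apply strictMonoOn_of_deriv_pos (convex_Icc 0 Q) hpc.continuousOn
    intro x hx
    rw [(hpderiv x).deriv]
    exact hp'pos x (interior_subset hx)
  -- bijection onto Icc (p 0) (p a)
  have hbij : Set.BijOn p (Icc 0 a) (Icc (p 0) (p a)) := by
    constructor
    · intro x hx
      exact ⟨hmono.monotoneOn ⟨le_rfl, hQ.le⟩ (hsub hx) hx.1,
        hmono.monotoneOn (hsub hx) ⟨ha0, haQ⟩ hx.2⟩
    constructor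
    · exact (hmono.injOn).mono hsub
    · exact intermediate_value_Icc ha0 hpc.continuousOn
  -- homeomorphism between [0,a] and [p 0, p a]
  have hecont : Continuous (hbij.equiv p) := by
    have : Continuous fun x : Icc (0:ℝ) a => p x := hpc.comp continuous_subtype_val
    exact this.subtype_mk _
  let h : Icc (0:ℝ) a ≃ₜ Icc (p 0) (p a) := hecont.homeoOfEquivCompactToT2
  -- continuity of μ on [p 0, p a]
  have hμcont : ContinuousOn μ (Icc (p 0) (p a)) := by
    rw [continuousOn_iff_continuous_restrict]
    have key : (Icc (p 0) (p a)).domRestrict μ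
        = (fun u : Icc (0:ℝ) a => 1 / p' u) ∘ h.symm := by
      funext y
      have hy : p ((h.symm y : Icc (0:ℝ) a) : ℝ) = y :=
        congrArg Subtype.val (h.apply_symm_apply y)
      simp only [Function.comp_apply, domRestrict_apply, ← hy]
      exact hμ _ (hsub (h.symm y).2)
    rw [key]
    exact (continuous_const.div (hp'cont.comp continuous_subtype_val)
      (fun u => (hp'pos u.1 (hsub u.2)).ne')).comp h.symm.continuous
  have himg : p '' uIcc (0:ℝ) a = Icc (p 0) (p a) := by
    rw [uIcc_of_le ha0]; exact hbij.image_eq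
  have hder : ∀ x ∈ uIcc (0:ℝ) a, HasDerivAt p (p' x) x := fun x _ => hpderiv x
  have huIcc : uIcc (0:ℝ) a = Icc 0 a := uIcc_of_le ha0
  constructor
  · have hsubst : (∫ x in (0:ℝ)..a, p' x • (μ ∘ p) x) = ∫ y in (p 0)..(p a), μ y :=
      integral_comp_smul_deriv' hder hp'cont.continuousOn (himg ▸ hμcont)
    rw [← hsubst]
    have : (∫ x in (0:ℝ)..a, p' x • (μ ∘ p) x) = ∫ x in (0:ℝ)..a, (1:ℝ) := by
      apply integral_congr
      intro x hx
      rw [huIcc] at hx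
      have hne := (hp'pos x (hsub hx)).ne'
      simp only [Function.comp_apply, smul_eq_mul, hμ x (hsub hx)]
      field_simp
    rw [this]; simp
  · have hsubst : (∫ x in (0:ℝ)..a, p' x • ((fun y => y * μ y) ∘ p) x)
        = ∫ y in (p 0)..(p a), y * μ y :=
      integral_comp_smul_deriv' hder hp'cont.continuousOn
        (himg ▸ (continuousOn_id.mul hμcont))
    rw [← hsubst]
    have h1 : (∫ x in (0:ℝ)..a, p' x • ((fun y => y * μ y) ∘ p) x)
        = ∫ x in (0:ℝ)..a, p x := by
      apply integral_congr
      intro x hx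
      rw [huIcc] at hx
      have hne := (hp'pos x (hsub hx)).ne'
      simp only [Function.comp_apply, smul_eq_mul, hμ x (hsub hx)]
      field_simp
    have hF : ∀ x ∈ uIcc (0:ℝ) a, HasDerivAt (fun u => u * U X (Q - u)) (p x) x := by
      intro x _
      have hc : HasDerivAt (fun u : ℝ => U X (Q - u)) (U' X (Q - x) * (-1)) x :=
        (hU' X (Q - x)).comp x ((hasDerivAt_id x).const_sub Q)
      have := (hasDerivAt_id x).fun_mul hc
      refine this.congr_deriv ?_
      rw [hp x]; simp only [id_eq]; ring
    have h2 : (∫ x in (0:ℝ)..a, p x)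
        = a * U X (Q - a) - 0 * U X (Q - 0) :=
      integral_eq_sub_of_hasDerivAt hF (hpc.intervalIntegrable 0 a)
    rw [h1, h2]; ring
end

section
/- Let g : ℝ × [0, K] → ℝ satisfy: g(x, 0) = 0, g(x, ·) is convex and increasing, and g(x, y) ≥ U(x, 0)·y for all y ∈ [0, K], where U(x, ·) is nonincreasing. Then for all x, all Q ≥ 0, all y ∈ (0, K], and all y' with 0 < y' ≤ min(y, Q): y'·U(x, Q - y') + g(x, y - y') ≤ g(x, y). -/
open Set

/-- It is never advantageous to pay the full terminal penalty: buying `y'` shares from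
the LOB at cost `y'·U(x,Q-y')` and paying the penalty `g(x, y-y')` on the rest never
costs more than the full penalty `g(x,y)`. -/
theorem stmt_4 (K : ℝ) (hK : 0 < K) (U g : ℝ → ℝ → ℝ)
    (hg0 : ∀ x, g x 0 = 0)
    (hgconv : ∀ x, ConvexOn ℝ (Icc (0:ℝ) K) (g x))
    (hgmono : ∀ x, MonotoneOn (g x) (Icc (0:ℝ) K))
    (hglin : ∀ x, ∀ y ∈ Icc (0:ℝ) K, U x 0 * y ≤ g x y)
    (hUanti : ∀ x, Antitone (U x)) :
    ∀ (x Q : ℝ), 0 ≤ Q → ∀ y ∈ Ioc (0:ℝ) K, ∀ y' : ℝ, 0 < y' → y' ≤ min y Q →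
      y' * U x (Q - y') + g x (y - y') ≤ g x y := by
  intro x Q hQ y hy y' hy' hy'min
  obtain ⟨hy0, hyK⟩ := hy
  have hy'y : y' ≤ y := le_trans hy'min (min_le_left _ _)
  have hy'Q : y' ≤ Q := le_trans hy'min (min_le_right _ _)
  -- U x (Q - y') ≤ U x 0
  have hU : U x (Q - y') ≤ U x 0 := hUanti x (by linarith)
  -- convexity: g x (y - y') ≤ ((y - y')/y) * g x y
  have h0mem : (0:ℝ) ∈ Icc (0:ℝ) K := ⟨le_refl _, hK.le⟩
  have hymem : y ∈ Icc (0:ℝ) K := ⟨hy0.le, hyK⟩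
  have ha : (0:ℝ) ≤ y'/y := div_nonneg hy'.le hy0.le
  have hb : (0:ℝ) ≤ (y - y')/y := div_nonneg (by linarith) hy0.le
  have hab : y'/y + (y - y')/y = 1 := by field_simp; ring
  have hconv := (hgconv x).2 h0mem hymem ha hb hab
  have hpt : (y'/y) • (0:ℝ) + ((y - y')/y) • y = y - y' := by
    simp only [smul_eq_mul, mul_zero, zero_add]
    field_simp
  rw [hpt] at hconv
  simp only [smul_eq_mul, hg0, mul_zero, zero_add] at hconv
  -- g x y ≥ U x 0 * y
  have hlin := hglin x y hymem
  have key : U x 0 * y' + g x (y - y') ≤ g x y := by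
    have h1 : (y - y')/y * g x y = g x y - y'/y * g x y := by field_simp
    have h2 : y'/y * (U x 0 * y) ≤ y'/y * g x y :=
      mul_le_mul_of_nonneg_left hlin ha
    have h3 : y'/y * (U x 0 * y) = U x 0 * y' := by field_simp
    nlinarith
  nlinarith [mul_le_mul_of_nonneg_left hU hy'.le]
end

section
/- Let 𝒢 be a probability space filtration setup with F_s = Ĝ_s ∨ σ(Y_r : t ≤ r ≤ s), where Ĝ_s := F^W_s ∨ F^Y_{s∧t}, for a fixed t. Let τ₁ᵗ be the first jump time of Y after t. Then for any s ≥ t and any F_s-measurable random variable X, there exists an Ĝ_s-measurable random variable X̃ such that X·1_{τ₁ᵗ > s} = X̃·1_{τ₁ᵗ > s} almost surely. -/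
open Set MeasureTheory

/-- Doob–Dynkin factorization for `ℝ≥0∞`-valued functions. -/
lemma factor_ennreal {Ω γ : Type*} (j : Ω → γ) (m : MeasurableSpace γ)
    (X : Ω → ENNReal) (hX : Measurable[m.comap j] X) :
    ∃ φ : γ → ENNReal, Measurable[m] φ ∧ ∀ ω, X ω = φ (j ω) := by
  letI : MeasurableSpace Ω := m.comap j
  letI : MeasurableSpace γ := m
  refine Measurable.ennreal_induction (motive := fun X => ∃ φ : γ → ENNReal,
    Measurable φ ∧ ∀ ω, X ω = φ (j ω)) ?_ ?_ ?_ hX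
  · intro c s hs
    obtain ⟨S, hS, rfl⟩ := hs
    exact ⟨Set.indicator S fun _ => c, measurable_const.indicator hS, fun ω => rfl⟩
  · rintro f g _ _ _ ⟨φf, hφf, hf⟩ ⟨φg, hφg, hg⟩
    exact ⟨φf + φg, hφf.add hφg, fun ω => by simp [hf ω, hg ω]⟩
  · rintro f _ _ hP
    choose φ hφ hfac using hP
    exact ⟨fun y => ⨆ n, φ n y, .iSup hφ, fun ω => by simp only [hfac]⟩

/-- Doob–Dynkin factorization for real-valued functions. -/
lemma factor_real {Ω γ : Type*} (j : Ω → γ) (m : MeasurableSpace γ)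
    (X : Ω → ℝ) (hX : Measurable[m.comap j] X) :
    ∃ φ : γ → ℝ, Measurable[m] φ ∧ ∀ ω, X ω = φ (j ω) := by
  letI : MeasurableSpace Ω := m.comap j
  obtain ⟨φp, hφp, hp⟩ := factor_ennreal j m (fun ω => ENNReal.ofReal (X ω))
    (ENNReal.measurable_ofReal.comp hX)
  obtain ⟨φn, hφn, hn⟩ := factor_ennreal j m (fun ω => ENNReal.ofReal (-X ω))
    (ENNReal.measurable_ofReal.comp hX.neg)
  refine ⟨fun y => (φp y).toReal - (φn y).toReal,
    (hφp.ennreal_toReal).sub (hφn.ennreal_toReal), fun ω => ?_⟩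
  have h1 : φp (j ω) = ENNReal.ofReal (X ω) := (hp ω).symm
  have h2 : φn (j ω) = ENNReal.ofReal (-X ω) := (hn ω).symm
  show X ω = (φp (j ω)).toReal - (φn (j ω)).toReal
  rw [h1, h2]
  rcases le_total 0 (X ω) with h | h
  · rw [ENNReal.toReal_ofReal h, ENNReal.ofReal_of_nonpos (by linarith)]
    simp
  · rw [ENNReal.ofReal_of_nonpos h, ENNReal.toReal_ofReal (by linarith)]
    simp

/-- Lemma 6.1 of the paper: with `Ĝ_s = F^W_s ∨ F^Y_{s∧t}` and
`F_s = Ĝ_s ∨ σ(Y_r : t ≤ r ≤ s)`, on the event `{τ₁ᵗ > s}` (no jump of `Y` in `(t,s]`,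
so that `Y` is frozen at its time-`t` value on `[t,s]`), every `F_s`-measurable random
variable coincides a.s. with a `Ĝ_s`-measurable one. -/
theorem stmt_13 {Ω : Type*} [mΩ : MeasurableSpace Ω] (μ : Measure Ω) [IsProbabilityMeasure μ]
    (G : MeasurableSpace Ω) (hG : G ≤ mΩ)
    (Y : ℝ → Ω → ℝ) (t s : ℝ) (hts : t ≤ s)
    (τ1 : Ω → ℝ)
    (hτ1 : ∀ ω, t < τ1 ω)
    (hYt : Measurable[G] (Y t))
    (hfreeze : ∀ ω, s < τ1 ω → ∀ r ∈ Icc t s, Y r ω = Y t ω)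
    (F : MeasurableSpace Ω)
    (hF : F = G ⊔ ⨆ r ∈ Icc t s, MeasurableSpace.comap (Y r) inferInstance)
    (X : Ω → ℝ) (hX : Measurable[F] X) :
    ∃ X' : Ω → ℝ, Measurable[G] X' ∧ ∀ᵐ ω ∂μ, s < τ1 ω → X ω = X' ω := by
  classical
  set γ := Ω × (Icc t s → ℝ) with hγ
  letI mγ : MeasurableSpace γ := @Prod.instMeasurableSpace _ _ G _
  set j : Ω → γ := fun ω => (ω, fun r => Y (r : ℝ) ω) with hj
  -- F ≤ comap j mγ
  have hle : F ≤ mγ.comap j := by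
    rw [hF]
    have hfst : @Measurable γ Ω mγ G Prod.fst := @measurable_fst _ _ G _
    have hsnd : @Measurable γ (Icc t s → ℝ) mγ _ Prod.snd := @measurable_snd _ _ G _
    refine sup_le ?_ ?_
    · intro A hA
      exact ⟨Prod.fst ⁻¹' A, hfst hA, rfl⟩
    · refine iSup_le fun r => iSup_le fun hr => ?_
      intro A hA
      obtain ⟨B, hB, rfl⟩ := hA
      refine ⟨(fun y : γ => y.2 ⟨r, hr⟩) ⁻¹' B, ?_, rfl⟩
      exact (@Measurable.eval _ _ _ mγ _ ⟨r, hr⟩ _ hsnd) hB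
  have hXc : Measurable[mγ.comap j] X := hX.mono hle le_rfl
  obtain ⟨φ, hφ, hfac⟩ := factor_real j mγ X hXc
  have hk1 : @Measurable Ω Ω G G (fun ω => ω) := measurable_id
  have hk2 : @Measurable Ω (Icc t s → ℝ) G _ (fun ω _ => Y t ω) :=
    @measurable_pi_lambda Ω (Icc t s) (fun _ => ℝ) G _ _ fun _ => hYt
  have hk : @Measurable Ω γ G mγ (fun ω => (ω, fun _ => Y t ω)) :=
    Measurable.prod hk1 hk2
  refine ⟨fun ω => φ (ω, fun _ => Y t ω), (@Measurable.comp Ω γ ℝ G mγ _ _ _ hφ hk), ?_⟩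
  · refine Filter.Eventually.of_forall fun ω hω => ?_
    rw [hfac ω]
    congr 1
    simp only [hj]
    refine Prod.ext rfl ?_
    funext r
    exact hfreeze ω hω r r.2
end
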